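/- For fixed ε > 0, the radially symmetric extension U^ε : B(0,1) → ℝ defined by U^ε(x) = u^ε(|x|) (with u^ε(0) = ∫_0^1 (−p^ε(s)) ds) is Fréchet differentiable at the origin with derivative DU^ε(0) = 0. -/

import Mathlib

open Filter Set Real
open MeasureTheory

/-- For fixed `ε > 0`, the radially symmetric extension
`U^ε(x) = u^ε(|x|)` (with `u^ε(r) = ∫_r^1 (-p^ε(s)) ds`, so in particular
`u^ε(0) = ∫_0^1 (-p^ε(s)) ds`) is Fréchet differentiable at the origin of `ℝⁿ`
with derivative `DU^ε(0) = 0`. -/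
theorem eikonal_radial_extension_differentiable_at_origin
    (n : ℕ) (hn : 1 ≤ n) (ε : ℝ) (hε : 0 < ε) (V : ℝ → ℝ)
    (hV0 : ∀ s ∈ Set.Icc (0:ℝ) 1, 0 ≤ V s)
    (hVb : ∃ M : ℝ, ∀ s ∈ Set.Icc (0:ℝ) 1, |V s| ≤ M)
    (hVlip : ∃ K : NNReal, LipschitzOnWith K V (Set.Icc 0 1))
    (p : ℝ → ℝ)
    (hp : ∀ r : ℝ, p r =
      -(1/ε) * (r ^ (n-1))⁻¹ * Real.exp (-r/ε) *
        ∫ s in (0:ℝ)..r, s ^ (n-1) * Real.exp (s/ε) * V s) :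
    HasFDerivAt (fun x : EuclideanSpace ℝ (Fin n) => ∫ s in ‖x‖..(1:ℝ), -p s)
      (0 : EuclideanSpace ℝ (Fin n) →L[ℝ] ℝ) 0 := by
  obtain ⟨M, hM⟩ := hVb
  obtain ⟨K, hK⟩ := hVlip
  have hM0 : 0 ≤ M := le_trans (abs_nonneg _) (hM 0 (by norm_num))
  have hn0 : (0:ℝ) < n := by exact_mod_cast hn
  have hVcont : ContinuousOn V (Icc 0 1) := hK.continuousOn
  set g : ℝ → ℝ := fun s => s ^ (n-1) * Real.exp (s/ε) * V s with hgdef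
  have hgcont : ContinuousOn g (Icc 0 1) := by
    apply ContinuousOn.mul _ hVcont
    exact ((continuousOn_pow _).mul
      ((Real.continuous_exp.comp (continuous_id.div_const ε)).continuousOn))
  set C : ℝ := M * Real.exp (1/ε) / (n * ε) with hCdef
  have hC0 : 0 ≤ C := div_nonneg (mul_nonneg hM0 (Real.exp_pos _).le)
    (mul_nonneg hn0.le hε.le)
  -- bound on inner integral
  have hI : ∀ r ∈ Icc (0:ℝ) 1, |∫ s in (0:ℝ)..r, g s| ≤ M * Real.exp (1/ε) * r ^ n / n := by
    intro r hr
    have h1 : ‖∫ s in (0:ℝ)..r, g s‖ ≤ |∫ s in (0:ℝ)..r, M * Real.exp (1/ε) * s ^ (n-1)| := by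
      apply intervalIntegral.norm_integral_le_abs_of_norm_le
      · filter_upwards [MeasureTheory.ae_restrict_mem measurableSet_uIoc] with s hs
        rw [uIoc_of_le hr.1] at hs
        have hs0 : 0 ≤ s := hs.1.le
        have hs1 : s ≤ 1 := hs.2.trans hr.2
        have hVs := hM s ⟨hs0, hs1⟩
        have he : Real.exp (s/ε) ≤ Real.exp (1/ε) := by
          apply Real.exp_le_exp.2; gcongr
        calc ‖g s‖ = s ^ (n-1) * Real.exp (s/ε) * |V s| := by
              rw [Real.norm_eq_abs, hgdef]
              rw [abs_mul, abs_mul, abs_of_nonneg (pow_nonneg hs0 _),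
                abs_of_nonneg (Real.exp_pos _).le]
          _ ≤ s ^ (n-1) * Real.exp (1/ε) * M := by
              gcongr
          _ = M * Real.exp (1/ε) * s ^ (n-1) := by ring
      · exact (Continuous.intervalIntegrable (by continuity) _ _)
    have h2 : ∫ s in (0:ℝ)..r, M * Real.exp (1/ε) * s ^ (n-1)
        = M * Real.exp (1/ε) * (r ^ n / n) := by
      rw [intervalIntegral.integral_const_mul, integral_pow]
      have hnn : n - 1 + 1 = n := Nat.sub_add_cancel hn
      rw [hnn]
      have hz : (0:ℝ) ^ n = 0 := zero_pow (by omega)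
      have hcast : ((n-1 : ℕ):ℝ) + 1 = (n:ℝ) := by exact_mod_cast hnn
      rw [hz, hcast]
      ring
    calc |∫ s in (0:ℝ)..r, g s| ≤ |∫ s in (0:ℝ)..r, M * Real.exp (1/ε) * s ^ (n-1)| := h1
      _ = M * Real.exp (1/ε) * r ^ n / n := by
          rw [h2, abs_of_nonneg (mul_nonneg (mul_nonneg hM0 (Real.exp_pos _).le)
            (div_nonneg (pow_nonneg hr.1 _) hn0.le))]
          ring
  -- pointwise bound on p
  have hpb : ∀ r ∈ Ioc (0:ℝ) 1, |p r| ≤ C * r := by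
    intro r hr
    have hr0 : 0 < r := hr.1
    have hrpow : (0:ℝ) < r ^ (n-1) := pow_pos hr0 _
    have hIr := hI r ⟨hr0.le, hr.2⟩
    have he1 : Real.exp (-r/ε) ≤ 1 := by
      rw [Real.exp_le_one_iff]
      have : 0 < r / ε := div_pos hr0 hε
      rw [neg_div]; linarith
    rw [hp r]
    rw [abs_mul, abs_mul, abs_mul]
    have h1 : |(-(1/ε))| = 1/ε := by
      rw [abs_neg, abs_of_nonneg (one_div_nonneg.2 hε.le)]
    have h2 : |(r ^ (n-1))⁻¹| = (r ^ (n-1))⁻¹ := abs_of_nonneg (inv_nonneg.2 hrpow.le)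
    have h3 : |Real.exp (-r/ε)| = Real.exp (-r/ε) := abs_of_nonneg (Real.exp_pos _).le
    rw [h1, h2, h3]
    have key : 1/ε * (r ^ (n-1))⁻¹ * 1 * (M * Real.exp (1/ε) * r ^ n / n) = C * r := by
      have hrn : r ^ n = r ^ (n-1) * r := by
        rw [← pow_succ, Nat.sub_add_cancel hn]
      rw [hrn, hCdef]
      field_simp
    have hA : 0 ≤ 1/ε * (r ^ (n-1))⁻¹ := mul_nonneg (one_div_nonneg.2 hε.le) (inv_nonneg.2 hrpow.le)
    calc 1/ε * (r ^ (n-1))⁻¹ * Real.exp (-r/ε) * |∫ s in (0:ℝ)..r, g s|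
        ≤ 1/ε * (r ^ (n-1))⁻¹ * 1 * (M * Real.exp (1/ε) * r ^ n / n) :=
          mul_le_mul (mul_le_mul_of_nonneg_left he1 hA) hIr (abs_nonneg _)
            (by rw [mul_one]; exact hA)
      _ = C * r := key
  -- continuity of p on (0,1]
  have hgint : IntegrableOn g (Icc 0 1) volume := hgcont.integrableOn_compact isCompact_Icc
  have hFcont : ContinuousOn (fun r => ∫ s in (0:ℝ)..r, g s) (Icc 0 1) := by
    have := intervalIntegral.continuousOn_primitive_interval
      (a := 0) (b := 1) (f := g) (μ := volume) (by rwa [uIcc_of_le zero_le_one])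
    rwa [uIcc_of_le zero_le_one] at this
  have hpcont : ContinuousOn p (Ioc 0 1) := by
    have h : ContinuousOn
        (fun r => -(1/ε) * (r ^ (n-1))⁻¹ * Real.exp (-r/ε) * ∫ s in (0:ℝ)..r, g s)
        (Ioc 0 1) := by
      have c1 : ContinuousOn (fun r : ℝ => (r ^ (n-1))⁻¹) (Ioc 0 1) :=
        ContinuousOn.inv₀ (continuousOn_pow _) (fun r hr => pow_ne_zero _ (ne_of_gt hr.1))
      have c2 : ContinuousOn (fun r : ℝ => Real.exp (-r/ε)) (Ioc 0 1) :=
        (Real.continuous_exp.comp (continuous_neg.div_const ε)).continuousOn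
      exact ((continuousOn_const.mul c1).mul c2).mul (hFcont.mono Ioc_subset_Icc_self)
    exact h.congr (fun r _ => hp r)
  -- integrability of p on [0,1]
  have hpint : IntervalIntegrable p volume 0 1 := by
    rw [intervalIntegrable_iff, uIoc_of_le zero_le_one]
    refine ⟨hpcont.aestronglyMeasurable measurableSet_Ioc,
      HasFiniteIntegral.restrict_of_bounded (C := C) measure_Ioc_lt_top ?_⟩
    rw [ae_restrict_iff' measurableSet_Ioc]
    filter_upwards with r
    intro hr
    calc ‖p r‖ = |p r| := rfl
      _ ≤ C * r := hpb r hr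
      _ ≤ C * 1 := by gcongr; exact hr.2
      _ = C := mul_one C
  -- main argument
  rw [hasFDerivAt_iff_isLittleO_nhds_zero]
  rw [Asymptotics.isLittleO_iff]
  intro c hc
  have hC1 : 0 < C + 1 := by linarith
  have hrad : 0 < min 1 (c / (C + 1)) := lt_min one_pos (div_pos hc hC1)
  filter_upwards [Metric.ball_mem_nhds (0 : EuclideanSpace ℝ (Fin n)) hrad] with h hh
  rw [Metric.mem_ball, dist_zero_right] at hh
  have ht1 : ‖h‖ ≤ 1 := le_of_lt (lt_of_lt_of_le hh (min_le_left _ _))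
  have ht2 : ‖h‖ ≤ c / (C + 1) := le_of_lt (lt_of_lt_of_le hh (min_le_right _ _))
  have ht0 : 0 ≤ ‖h‖ := norm_nonneg h
  set t := ‖h‖ with htdef
  -- split the integral
  have hint1 : IntervalIntegrable (fun s => -p s) volume 0 t :=
    (hpint.mono_set (by rw [uIcc_of_le ht0, uIcc_of_le zero_le_one]; exact Icc_subset_Icc le_rfl ht1)).neg
  have hint2 : IntervalIntegrable (fun s => -p s) volume t 1 :=
    (hpint.mono_set (by rw [uIcc_of_le ht1, uIcc_of_le zero_le_one]; exact Icc_subset_Icc ht0 le_rfl)).neg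
  have hsplit : (∫ s in (0:ℝ)..t, -p s) + (∫ s in t..(1:ℝ), -p s) = ∫ s in (0:ℝ)..(1:ℝ), -p s :=
    intervalIntegral.integral_add_adjacent_intervals hint1 hint2
  have hdiff : (∫ s in ‖(0:EuclideanSpace ℝ (Fin n)) + h‖..(1:ℝ), -p s)
      - (∫ s in ‖(0:EuclideanSpace ℝ (Fin n))‖..(1:ℝ), -p s) = ∫ s in (0:ℝ)..t, p s := by
    rw [zero_add, norm_zero]
    rw [← hsplit]
    simp only [intervalIntegral.integral_neg]
    ring
  have hbound : ‖∫ s in (0:ℝ)..t, p s‖ ≤ C * t * |t - 0| := by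
    apply intervalIntegral.norm_integral_le_of_norm_le_const
    intro s hs
    rw [uIoc_of_le ht0] at hs
    have hs1 : s ∈ Ioc (0:ℝ) 1 := ⟨hs.1, hs.2.trans ht1⟩
    calc ‖p s‖ = |p s| := rfl
      _ ≤ C * s := hpb s hs1
      _ ≤ C * t := by gcongr; exact hs.2
  simp only [ContinuousLinearMap.zero_apply, sub_zero]
  rw [hdiff]
  have : C * t * |t - 0| ≤ c * t := by
    rw [sub_zero, abs_of_nonneg ht0]
    have h1 : t * (C + 1) ≤ c := (le_div_iff₀ hC1).1 ht2
    nlinarith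
  calc ‖∫ s in (0:ℝ)..t, p s‖ ≤ C * t * |t - 0| := hbound
    _ ≤ c * t := this
    _ = c * ‖h‖ := rfl
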